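/- For any design phi and any behaviour-forming set of designs, the bi-orthogonal of the singleton {phi} is exactly the upward closure of phi in the observational order: {phi}^⊥⊥ = { phi' : phi ⊑ phi' }. -/

import Mathlib

/-! Designs of ludics, as (possibly infinitely branching) trees of alternating
positive actions `(+, ξ, I)` and negative actions `(-, ζ, J)`, with leaves
`Ω` (the partial design) and the daimon `✠`. Addresses (loci) are lists of
natural numbers (biases). -/

mutual
  inductive PosDesign : Type
    | omega : PosDesign
    | daimon : PosDesign
    | pos : List ℕ → Finset ℕ → (ℕ → NegDesign) → PosDesign
  inductive NegDesign : Type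
    | neg : (Finset ℕ → PosDesign) → NegDesign
end

def NegDesign.app : NegDesign → Finset ℕ → PosDesign
  | .neg f, J => f J

/-! The order `⊑` on designs, generated by `Ω ⊑ φ`, `φ ⊑ ✠`, congruence,
reflexivity and transitivity.  The two boolean parameters state whether the
axiom `Ω ⊑ φ` (resp. `φ ⊑ ✠`) is allowed: `LeP true true` is the observational
order `⊑`, `LeP false true` is `≤L`, and `LeP true false` is `≤R` (the stable
order). -/

mutual
  inductive LeP (o d : Bool) : PosDesign → PosDesign → Prop
    | omega (φ : PosDesign) (h : o = true) : LeP o d .omega φ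
    | daimon (φ : PosDesign) (h : d = true) : LeP o d φ .daimon
    | refl (φ : PosDesign) : LeP o d φ φ
    | trans {φ₁ φ₂ φ₃ : PosDesign} :
        LeP o d φ₁ φ₂ → LeP o d φ₂ φ₃ → LeP o d φ₁ φ₃
    | pos (ξ : List ℕ) (I : Finset ℕ) (k k' : ℕ → NegDesign)
        (h : ∀ i ∈ I, LeN o d (k i) (k' i)) : LeP o d (.pos ξ I k) (.pos ξ I k')
  inductive LeN (o d : Bool) : NegDesign → NegDesign → Prop
    | neg (f f' : Finset ℕ → PosDesign)
        (h : ∀ J, LeP o d (f J) (f' J)) : LeN o d (.neg f) (.neg f')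
end

/-! Normalization (the affine abstract machine) and orthogonality. -/

/-- The environment update in rule (R): the cut design at address `ξ` is
consumed, and its immediate subdesigns `k i` (for `i ∈ I`) are installed at the
addresses `ξ ⋆ i`. -/
def stepEnv (Ψ : List ℕ → Option NegDesign) (ξ : List ℕ) (I : Finset ℕ)
    (k : ℕ → NegDesign) : List ℕ → Option NegDesign :=
  fun ζ =>
    if ζ ≠ [] ∧ ζ.dropLast = ξ ∧ ζ.getLast! ∈ I then some (k ζ.getLast!)
    else if ζ = ξ then none else Ψ ζ

/-- `Conv φ Ψ` : the normalization of the net `⟨φ | Ψ⟩` converges, i.e. the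
weak reduction machine started on `φ` with environment `Ψ` reaches `✠`. -/
inductive Conv : PosDesign → (List ℕ → Option NegDesign) → Prop
  | dai (Ψ : List ℕ → Option NegDesign) : Conv .daimon Ψ
  | step (ξ : List ℕ) (I : Finset ℕ) (k : ℕ → NegDesign)
      (f : Finset ℕ → PosDesign) (Ψ : List ℕ → Option NegDesign)
      (h : Ψ ξ = some (.neg f)) :
      Conv (f I) (stepEnv Ψ ξ I k) → Conv (.pos ξ I k) Ψ

/-- Orthogonality of a positive design on the base `⊢ ε` and a negative design
on the base `ε ⊢`: normalization of the cut between them converges to `✠`. -/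
def orth (φ : PosDesign) (ψ : NegDesign) : Prop :=
  Conv φ (fun ζ => if ζ = [] then some ψ else none)

/-! Typing (well-formedness) of designs on a given base. -/

mutual
  /-- `WFP φ Λ` : `φ` is a design on the positive base `⊢ Λ`. -/
  inductive WFP : PosDesign → Finset (List ℕ) → Prop
    | omega (Λ : Finset (List ℕ)) : WFP .omega Λ
    | dai (Λ : Finset (List ℕ)) : WFP .daimon Λ
    | pos (ξ : List ℕ) (I : Finset ℕ) (k : ℕ → NegDesign)
        (Λ : Finset (List ℕ)) (Λi : ℕ → Finset (List ℕ))
        (hξ : ξ ∈ Λ)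
        (hsub : ∀ i ∈ I, Λi i ⊆ Λ.erase ξ)
        (hdisj : ∀ i ∈ I, ∀ j ∈ I, i ≠ j → Disjoint (Λi i) (Λi j))
        (hk : ∀ i ∈ I, WFN (k i) (ξ ++ [i]) (Λi i)) :
        WFP (.pos ξ I k) Λ
  /-- `WFN ψ ξ Λ` : `ψ` is a design on the negative base `ξ ⊢ Λ`. -/
  inductive WFN : NegDesign → List ℕ → Finset (List ℕ) → Prop
    | neg (f : Finset ℕ → PosDesign) (ξ : List ℕ) (Λ : Finset (List ℕ))
        (h : ∀ J : Finset ℕ, WFP (f J) (J.image (fun j => ξ ++ [j]) ∪ Λ)) :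
        WFN (.neg f) ξ Λ
end


/-! ### Simulation: a structural characterization of the order `⊑`. -/

mutual
  def SimP : PosDesign → PosDesign → Prop
    | .omega, _ => True
    | .daimon, .daimon => True
    | .daimon, .omega => False
    | .daimon, .pos _ _ _ => False
    | .pos _ _ _, .daimon => True
    | .pos _ _ _, .omega => False
    | .pos ξ I k, .pos ξ' I' k' => ξ = ξ' ∧ I = I' ∧ ∀ i ∈ I, SimN (k i) (k' i)
  def SimN : NegDesign → NegDesign → Prop
    | .neg f, .neg f' => ∀ J, SimP (f J) (f' J)
end

theorem simP_daimon (φ : PosDesign) : SimP φ .daimon := by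
  cases φ <;> simp [SimP]

theorem simP_omega (φ : PosDesign) : SimP .omega φ := by
  simp [SimP]

theorem simP_daimon_left {φ : PosDesign} (h : SimP .daimon φ) : φ = .daimon := by
  cases φ <;> simp_all [SimP]

theorem simP_refl (φ : PosDesign) : SimP φ φ := by
  refine PosDesign.rec (motive_1 := fun φ => SimP φ φ) (motive_2 := fun ν => SimN ν ν) ?_ ?_ ?_ ?_ φ
  · simp [SimP]
  · simp [SimP]
  · intro ξ I k ih; exact ⟨rfl, rfl, fun i _ => ih i⟩
  · intro f ih; exact fun J => ih J

theorem simN_refl (ν : NegDesign) : SimN ν ν := by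
  refine NegDesign.rec (motive_1 := fun φ => SimP φ φ) (motive_2 := fun ν => SimN ν ν) ?_ ?_ ?_ ?_ ν
  · simp [SimP]
  · simp [SimP]
  · intro ξ I k ih; exact ⟨rfl, rfl, fun i _ => ih i⟩
  · intro f ih; exact fun J => ih J

theorem simP_trans : ∀ (φ₁ : PosDesign), (∀ φ₂ φ₃, SimP φ₁ φ₂ → SimP φ₂ φ₃ → SimP φ₁ φ₃) :=
  PosDesign.rec
    (motive_1 := fun φ₁ => ∀ φ₂ φ₃, SimP φ₁ φ₂ → SimP φ₂ φ₃ → SimP φ₁ φ₃)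
    (motive_2 := fun ν₁ => ∀ ν₂ ν₃, SimN ν₁ ν₂ → SimN ν₂ ν₃ → SimN ν₁ ν₃)
    (by intro φ₂ φ₃ _ _; exact simP_omega _)
    (by
      intro φ₂ φ₃ h12 h23
      rcases simP_daimon_left h12 with rfl
      rcases simP_daimon_left h23 with rfl
      exact simP_daimon _)
    (by
      intro ξ I k ih φ₂ φ₃ h12 h23
      cases φ₂ with
      | omega => exact absurd h12 (by simp [SimP])
      | daimon => rcases simP_daimon_left h23 with rfl; exact simP_daimon _
      | pos ξ' I' k' =>
        obtain ⟨rfl, rfl, hk12⟩ := h12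
        cases φ₃ with
        | omega => exact absurd h23 (by simp [SimP])
        | daimon => exact simP_daimon _
        | pos ξ'' I'' k'' =>
          obtain ⟨rfl, rfl, hk23⟩ := h23
          exact ⟨rfl, rfl, fun i hi => ih i _ _ (hk12 i hi) (hk23 i hi)⟩)
    (by
      intro f ih ν₂ ν₃ h12 h23
      cases ν₂ with
      | neg f₂ =>
        cases ν₃ with
        | neg f₃ => exact fun J => ih J _ _ (h12 J) (h23 J))

theorem leP_simP : ∀ {φ χ : PosDesign}, LeP true true φ χ → SimP φ χ := by
  intro φ χ h
  refine LeP.rec (o := true) (d := true)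
    (motive_1 := fun φ χ _ => SimP φ χ) (motive_2 := fun ν ν' _ => SimN ν ν')
    ?_ ?_ ?_ ?_ ?_ ?_ h
  · intro φ _; exact simP_omega _
  · intro φ _; exact simP_daimon _
  · intro φ; exact simP_refl _
  · intro φ₁ φ₂ φ₃ _ _ h12 h23; exact simP_trans _ _ _ h12 h23
  · intro ξ I k k' _ ih; exact ⟨rfl, rfl, ih⟩
  · intro f f' _ ih; exact ih

/-! ### Monotonicity of convergence along simulation. -/

def EnvSim (Ψ Ψ' : List ℕ → Option NegDesign) : Prop :=
  ∀ ζ, (Ψ ζ = none ∧ Ψ' ζ = none) ∨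
    ∃ ν ν', Ψ ζ = some ν ∧ Ψ' ζ = some ν' ∧ SimN ν ν'

theorem envSim_step {Ψ Ψ' : List ℕ → Option NegDesign} (h : EnvSim Ψ Ψ')
    (ξ : List ℕ) (I : Finset ℕ) {k k' : ℕ → NegDesign}
    (hk : ∀ i ∈ I, SimN (k i) (k' i)) :
    EnvSim (stepEnv Ψ ξ I k) (stepEnv Ψ' ξ I k') := by
  intro ζ
  by_cases h1 : ζ ≠ [] ∧ ζ.dropLast = ξ ∧ ζ.getLast! ∈ I
  · right
    exact ⟨k ζ.getLast!, k' ζ.getLast!, by simp only [stepEnv]; rw [if_pos h1], by simp only [stepEnv]; rw [if_pos h1],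
      hk _ h1.2.2⟩
  · by_cases h2 : ζ = ξ
    · subst h2
      left
      constructor <;>
        · simp only [stepEnv]
          rw [if_neg h1]
          simp
    · have e1 : stepEnv Ψ ξ I k ζ = Ψ ζ := by simp only [stepEnv]; rw [if_neg h1, if_neg h2]
      have e2 : stepEnv Ψ' ξ I k' ζ = Ψ' ζ := by simp only [stepEnv]; rw [if_neg h1, if_neg h2]
      rw [e1, e2]; exact h ζ

theorem conv_mono {φ : PosDesign} {Ψ : List ℕ → Option NegDesign} (h : Conv φ Ψ) :
    ∀ χ Ψ', SimP φ χ → EnvSim Ψ Ψ' → Conv χ Ψ' := by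
  induction h with
  | dai Ψ =>
    intro χ Ψ' hsim _
    rcases simP_daimon_left hsim with rfl
    exact Conv.dai _
  | step ξ I k f Ψ hΨ hconv ih =>
    intro χ Ψ' hsim henv
    cases χ with
    | omega => exact absurd hsim (by simp [SimP])
    | daimon => exact Conv.dai _
    | pos ξ' I' k' =>
      obtain ⟨rfl, rfl, hkk⟩ := hsim
      rcases henv ξ with ⟨e1, _⟩ | ⟨ν, ν', e1, e2, hνν⟩
      · rw [hΨ] at e1; exact absurd e1 (by simp)
      · rw [hΨ] at e1
        injection e1 with e1; subst e1
        cases ν' with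
        | neg f' =>
          refine Conv.step ξ I k' f' Ψ' e2 ?_
          exact ih _ _ (hνν I) (envSim_step henv ξ I hkk)

theorem orth_mono {φ χ : PosDesign} (h : LeP true true φ χ) (ψ : NegDesign)
    (ho : orth φ ψ) : orth χ ψ := by
  refine conv_mono ho χ _ (leP_simP h) ?_
  intro ζ
  by_cases hζ : ζ = []
  · right; exact ⟨ψ, ψ, by simp [hζ], by simp [hζ], simN_refl ψ⟩
  · left; constructor <;> simp [hζ]

/-! ### List and environment helper lemmas. -/

theorem getLastBang (l : List ℕ) (h : l ≠ []) : l.getLast! = l.getLast h := by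
  cases l with
  | nil => exact absurd rfl h
  | cons a as => rfl

theorem getLastBang_concat (l : List ℕ) (i : ℕ) : (l ++ [i]).getLast! = i := by
  rw [getLastBang _ (by simp)]; exact List.getLast_concat

theorem stepEnv_cond_iff (ζ ξ : List ℕ) (I : Finset ℕ) :
    (ζ ≠ [] ∧ ζ.dropLast = ξ ∧ ζ.getLast! ∈ I) ↔ ∃ i ∈ I, ζ = ξ ++ [i] := by
  constructor
  · rintro ⟨h1, h2, h3⟩
    refine ⟨ζ.getLast!, h3, ?_⟩
    rw [getLastBang _ h1]
    rw [← h2]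
    exact (List.dropLast_append_getLast h1).symm
  · rintro ⟨i, hi, rfl⟩
    exact ⟨by simp, List.dropLast_concat, by rw [getLastBang_concat]; exact hi⟩

theorem stepEnv_concat (Ψ : List ℕ → Option NegDesign) (ξ : List ℕ) (I : Finset ℕ)
    (k : ℕ → NegDesign) (i : ℕ) (hi : i ∈ I) :
    stepEnv Ψ ξ I k (ξ ++ [i]) = some (k i) := by
  have hc : (ξ ++ [i]) ≠ [] ∧ (ξ ++ [i]).dropLast = ξ ∧ (ξ ++ [i]).getLast! ∈ I :=
    (stepEnv_cond_iff _ _ _).mpr ⟨i, hi, rfl⟩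
  simp only [stepEnv, if_pos hc]
  rw [getLastBang_concat]

theorem stepEnv_self (Ψ : List ℕ → Option NegDesign) (ξ : List ℕ) (I : Finset ℕ)
    (k : ℕ → NegDesign) : stepEnv Ψ ξ I k ξ = none := by
  have hc : ¬(ξ ≠ [] ∧ ξ.dropLast = ξ ∧ ξ.getLast! ∈ I) := by
    rw [stepEnv_cond_iff]
    rintro ⟨i, hi, he⟩
    have := congrArg List.length he
    simp at this
  simp only [stepEnv]; rw [if_neg hc, if_pos trivial]

theorem stepEnv_other (Ψ : List ℕ → Option NegDesign) (ξ : List ℕ) (I : Finset ℕ)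
    (k : ℕ → NegDesign) (ζ : List ℕ) (h1 : ∀ i ∈ I, ζ ≠ ξ ++ [i]) (h2 : ζ ≠ ξ) :
    stepEnv Ψ ξ I k ζ = Ψ ζ := by
  have hc : ¬(ζ ≠ [] ∧ ζ.dropLast = ξ ∧ ζ.getLast! ∈ I) := by
    rw [stepEnv_cond_iff]
    rintro ⟨i, hi, he⟩
    exact h1 i hi he
  simp only [stepEnv, if_neg hc, if_neg h2]

/-! ### Antichains of addresses, upward closures, weakening of typing. -/

def IsAnti (Λ : Finset (List ℕ)) : Prop :=
  ∀ σ ∈ Λ, ∀ τ ∈ Λ, σ <+: τ → σ = τ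

def Up (Λ : Finset (List ℕ)) (ζ : List ℕ) : Prop :=
  ∃ σ ∈ Λ, σ <+: ζ

theorem wfpMono {φ : PosDesign} {Λ Λ' : Finset (List ℕ)} (h : WFP φ Λ)
    (hsub : Λ ⊆ Λ') : WFP φ Λ' := by
  cases h with
  | omega => exact WFP.omega _
  | dai => exact WFP.dai _
  | pos ξ I k _ Λi hξ hs hd hk =>
    exact WFP.pos ξ I k Λ' Λi (hsub hξ)
      (fun i hi => (hs i hi).trans (Finset.erase_subset_erase _ hsub)) hd hk

theorem wfnMono {ν : NegDesign} {ξ : List ℕ} {Λ Λ' : Finset (List ℕ)}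
    (h : WFN ν ξ Λ) (hsub : Λ ⊆ Λ') : WFN ν ξ Λ' := by
  cases h with
  | neg f _ _ hf =>
    exact WFN.neg f ξ Λ'
      (fun J => wfpMono (hf J) (Finset.union_subset_union_right hsub))

theorem prefix_concat2 (ξ : List ℕ) (i j : ℕ) : ξ <+: (ξ ++ [i]) ++ [j] :=
  (List.prefix_append ξ [i]).trans (List.prefix_append _ [j])

theorem isAnti_step {Λ : Finset (List ℕ)} (hA : IsAnti Λ) {ξ : List ℕ}
    (hξ : ξ ∈ Λ) (i : ℕ) (J : Finset ℕ) :
    IsAnti (J.image (fun j => (ξ ++ [i]) ++ [j]) ∪ Λ.erase ξ) := by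
  intro σ hσ τ hτ hpre
  rcases Finset.mem_union.mp hσ with hσ | hσ <;> rcases Finset.mem_union.mp hτ with hτ | hτ
  · obtain ⟨j, _, rfl⟩ := Finset.mem_image.mp hσ
    obtain ⟨j', _, rfl⟩ := Finset.mem_image.mp hτ
    exact hpre.eq_of_length_le (by simp)
  · obtain ⟨j, _, rfl⟩ := Finset.mem_image.mp hσ
    have hτΛ := Finset.mem_of_mem_erase hτ
    have h1 : ξ = τ := hA ξ hξ τ hτΛ ((prefix_concat2 ξ i j).trans hpre)
    exfalso
    have := hpre.length_le
    rw [← h1] at this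
    simp at this
  · obtain ⟨j', _, rfl⟩ := Finset.mem_image.mp hτ
    exfalso
    have hσΛ := Finset.mem_of_mem_erase hσ
    have hσξ := Finset.ne_of_mem_erase hσ
    rcases List.prefix_or_prefix_of_prefix hpre (prefix_concat2 ξ i j') with h | h
    · exact hσξ (hA σ hσΛ ξ hξ h)
    · exact hσξ (hA ξ hξ σ hσΛ h).symm
  · exact hA σ (Finset.mem_of_mem_erase hσ) τ (Finset.mem_of_mem_erase hτ) hpre

theorem envAgree {Λ : Finset (List ℕ)} (hA : IsAnti Λ) {ξ : List ℕ} (hξ : ξ ∈ Λ)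
    (i : ℕ) (J : Finset ℕ) (Ψs Ψ E : List ℕ → Option NegDesign)
    (m κ : ℕ → NegDesign) (h0 : NegDesign) (I : Finset ℕ)
    (hΨ : ∀ σ, Ψ σ = if σ = ξ then some h0 else if σ ∈ Λ then Ψs σ else none)
    (hs2 : ∀ σ, σ ∉ (J.image (fun j => (ξ ++ [i]) ++ [j]) ∪ Λ.erase ξ) → Ψs σ = none)
    (hm : ∀ j ∈ J, Ψs ((ξ ++ [i]) ++ [j]) = some (m j))
    (hE : ∀ ζ, Up Λ ζ → E ζ = Ψ ζ) :
    ∀ ζ, Up (J.image (fun j => (ξ ++ [i]) ++ [j]) ∪ Λ.erase ξ) ζ →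
      stepEnv (stepEnv E ξ I κ) (ξ ++ [i]) J m ζ = Ψs ζ := by
  rintro ζ ⟨σ, hσ, hpre⟩
  rcases Finset.mem_union.mp hσ with hσ' | hσ'
  · obtain ⟨j, hj, rfl⟩ := Finset.mem_image.mp hσ'
    by_cases hζσ : ζ = (ξ ++ [i]) ++ [j]
    · subst hζσ
      rw [stepEnv_concat _ _ _ _ j hj, hm j hj]
    · -- ζ is a proper extension of (ξ ++ [i]) ++ [j]
      have hlen : ((ξ ++ [i]) ++ [j]).length < ζ.length := by
        rcases lt_or_eq_of_le hpre.length_le with h | h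
        · exact h
        · exact absurd (hpre.eq_of_length_le (le_of_eq h.symm)).symm hζσ
      simp only [List.length_append, List.length_singleton] at hlen
      have hξpre : ξ <+: ζ := (prefix_concat2 ξ i j).trans hpre
      have e1 : stepEnv (stepEnv E ξ I κ) (ξ ++ [i]) J m ζ = stepEnv E ξ I κ ζ := by
        refine stepEnv_other _ _ _ _ _ ?_ ?_
        · intro j' _ he; subst he; simp at hlen
        · intro he; subst he; simp at hlen
      have e2 : stepEnv E ξ I κ ζ = E ζ := by
        refine stepEnv_other _ _ _ _ _ ?_ ?_
        · intro i' _ he; subst he; simp at hlen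
        · intro he; subst he; omega
      have hζΛ : ζ ∉ Λ := by
        intro hmem
        have := hA ξ hξ ζ hmem hξpre
        subst this
        have := hpre.length_le
        simp at this
      have e3 : E ζ = none := by
        rw [hE ζ ⟨ξ, hξ, hξpre⟩, hΨ ζ]
        have hζξ : ζ ≠ ξ := by rintro rfl; exact hζΛ hξ
        rw [if_neg hζξ, if_neg hζΛ]
      have e4 : Ψs ζ = none := by
        refine hs2 ζ ?_
        intro hmem
        rcases Finset.mem_union.mp hmem with h' | h'
        · obtain ⟨j', _, he⟩ := Finset.mem_image.mp h'
          subst he; simp at hlen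
        · exact hζΛ (Finset.mem_of_mem_erase h')
      rw [e1, e2, e3, e4]
  · -- σ ∈ Λ.erase ξ
    have hσΛ := Finset.mem_of_mem_erase hσ'
    have hσξ := Finset.ne_of_mem_erase hσ'
    have hnotξ : ¬ ξ <+: ζ := by
      intro hc
      rcases List.prefix_or_prefix_of_prefix hpre hc with h | h
      · exact hσξ (hA σ hσΛ ξ hξ h)
      · exact hσξ (hA ξ hξ σ hσΛ h).symm
    have e1 : stepEnv (stepEnv E ξ I κ) (ξ ++ [i]) J m ζ = stepEnv E ξ I κ ζ := by
      refine stepEnv_other _ _ _ _ _ ?_ ?_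
      · intro j' _ he; subst he; exact hnotξ (prefix_concat2 ξ i j')
      · intro he; subst he; exact hnotξ (List.prefix_append ξ [i])
    have e2 : stepEnv E ξ I κ ζ = E ζ := by
      refine stepEnv_other _ _ _ _ _ ?_ ?_
      · intro i' _ he; subst he; exact hnotξ (List.prefix_append ξ [i'])
      · intro he; subst he; exact hnotξ List.prefix_rfl
    have hζξ : ζ ≠ ξ := by rintro rfl; exact hnotξ List.prefix_rfl
    rw [e1, e2, hE ζ ⟨σ, hσΛ, hpre⟩, hΨ ζ, if_neg hζξ]
    by_cases hζΛ : ζ ∈ Λ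
    · rw [if_pos hζΛ]
    · rw [if_neg hζΛ]
      refine (hs2 ζ ?_).symm
      intro hmem
      rcases Finset.mem_union.mp hmem with h' | h'
      · obtain ⟨j', _, he⟩ := Finset.mem_image.mp h'
        subst he; exact hnotξ (prefix_concat2 ξ i j')
      · exact hζΛ (Finset.mem_of_mem_erase h')

/-! ### The separation theorem. -/

def Counter (φ χ : PosDesign) (Λ : Finset (List ℕ)) : Prop :=
  ∃ Ψ : List ℕ → Option NegDesign,
    (∀ σ ∈ Λ, ∃ ψ, Ψ σ = some ψ ∧ WFN ψ σ ∅) ∧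
    (∀ σ, σ ∉ Λ → Ψ σ = none) ∧
    (∀ E, (∀ ζ, Up Λ ζ → E ζ = Ψ ζ) → Conv φ E) ∧
    (∀ E, (∀ ζ, Up Λ ζ → E ζ = Ψ ζ) → ¬ Conv χ E)

def QP (φ : PosDesign) : Prop :=
  ∀ (χ : PosDesign) (Λ : Finset (List ℕ)), IsAnti Λ → WFP φ Λ → WFP χ Λ →
    ¬ LeP true true φ χ → Counter φ χ Λ

def shallowEnv (Λ : Finset (List ℕ)) (ξ : List ℕ) (I : Finset ℕ) :
    List ℕ → Option NegDesign := fun σ =>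
  if σ ∈ Λ then
    some (.neg fun Jx => if σ = ξ ∧ Jx = I then .daimon else .omega)
  else none

theorem shallowEnv_eq (Λ : Finset (List ℕ)) (ξ : List ℕ) (I : Finset ℕ) (σ : List ℕ) :
    shallowEnv Λ ξ I σ =
      if σ ∈ Λ then
        some (.neg fun Jx => if σ = ξ ∧ Jx = I then .daimon else .omega)
      else none := rfl

theorem counter_shallow {Λ : Finset (List ℕ)} (ξ : List ℕ) (hξ : ξ ∈ Λ)
    (I : Finset ℕ) (k : ℕ → NegDesign) (χ : PosDesign)
    (hblock : ∀ ξ' I' k'', χ = .pos ξ' I' k'' → ξ' ∈ Λ ∧ ¬(ξ' = ξ ∧ I' = I))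
    (hnd : χ ≠ .daimon) :
    Counter (.pos ξ I k) χ Λ := by
  refine ⟨shallowEnv Λ ξ I, ?_, ?_, ?_, ?_⟩
  · intro σ hσ
    refine ⟨_, by rw [shallowEnv_eq, if_pos hσ], WFN.neg _ _ _ (fun Jy => ?_)⟩
    by_cases hc : σ = ξ ∧ Jy = I
    · rw [if_pos hc]; exact WFP.dai _
    · rw [if_neg hc]; exact WFP.omega _
  · intro σ hσ; rw [shallowEnv_eq, if_neg hσ]
  · intro E hE
    refine Conv.step ξ I k (fun Jx => if ξ = ξ ∧ Jx = I then .daimon else .omega) E ?_ ?_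
    · rw [hE ξ ⟨ξ, hξ, List.prefix_rfl⟩, shallowEnv_eq, if_pos hξ]
    · have hred : ((fun Jx => if ξ = ξ ∧ Jx = I then PosDesign.daimon else PosDesign.omega) I)
        = PosDesign.daimon := by simp
      rw [if_pos ⟨rfl, rfl⟩]
      exact Conv.dai _
  · intro E hE hc
    cases χ with
    | omega => cases hc
    | daimon => exact hnd rfl
    | pos ξ' I' k'' =>
      obtain ⟨hξ'Λ, hne⟩ := hblock ξ' I' k'' rfl
      cases hc with
      | step _ _ _ f _ hf hc2 =>
        rw [hE ξ' ⟨ξ', hξ'Λ, List.prefix_rfl⟩, shallowEnv_eq, if_pos hξ'Λ] at hf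
        injection hf with hf
        injection hf with hf
        subst hf
        have hred : ((fun Jx => if ξ' = ξ ∧ Jx = I then PosDesign.daimon
            else PosDesign.omega) I') = PosDesign.omega := by
          simp only [if_neg hne]
        rw [hred] at hc2
        cases hc2

def deepEnv (Λ : Finset (List ℕ)) (ξ : List ℕ) (h0 : NegDesign)
    (Ψs : List ℕ → Option NegDesign) : List ℕ → Option NegDesign := fun σ =>
  if σ = ξ then some h0 else if σ ∈ Λ then Ψs σ else none

theorem deepEnv_eq (Λ : Finset (List ℕ)) (ξ : List ℕ) (h0 : NegDesign)
    (Ψs : List ℕ → Option NegDesign) (σ : List ℕ) :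
    deepEnv Λ ξ h0 Ψs σ =
      if σ = ξ then some h0 else if σ ∈ Λ then Ψs σ else none := rfl

theorem wfp_pos_inv {ξ : List ℕ} {I : Finset ℕ} {k : ℕ → NegDesign}
    {Λ : Finset (List ℕ)} (h : WFP (.pos ξ I k) Λ) :
    ξ ∈ Λ ∧ ∀ i ∈ I, ∃ Λi, Λi ⊆ Λ.erase ξ ∧ WFN (k i) (ξ ++ [i]) Λi := by
  cases h with
  | pos _ _ _ _ Λi hξ hsub hdisj hk =>
    exact ⟨hξ, fun i hi => ⟨Λi i, hsub i hi, hk i hi⟩⟩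

theorem mainQ : ∀ φ : PosDesign, QP φ := by
  intro φ
  refine PosDesign.rec (motive_1 := QP)
    (motive_2 := fun ν => ∀ J, QP (ν.app J)) ?_ ?_ ?_ ?_ φ
  · -- omega
    intro χ Λ _ _ _ hle
    exact absurd (LeP.omega χ rfl) hle
  · -- daimon
    intro χ Λ hA _ hχ hle
    refine ⟨fun σ => if σ ∈ Λ then some (.neg fun _ => .omega) else none, ?_, ?_, ?_, ?_⟩
    · intro σ hσ
      exact ⟨_, by simp [hσ], WFN.neg _ _ _ (fun J => WFP.omega _)⟩
    · intro σ hσ; simp [hσ]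
    · intro E _; exact Conv.dai E
    · intro E hE hc
      cases χ with
      | omega => cases hc
      | daimon => exact hle (LeP.daimon _ rfl)
      | pos ξ' I' k'' =>
        obtain ⟨hξ', -⟩ := wfp_pos_inv hχ
        cases hc with
        | step _ _ _ f _ hf hc2 =>
          rw [hE ξ' ⟨ξ', hξ', List.prefix_rfl⟩] at hf
          simp only [hξ', if_true] at hf
          injection hf with hf
          injection hf with hf
          subst hf
          cases hc2
  · -- pos
    intro ξ I k ih χ Λ hA hφ hχ hle
    obtain ⟨hξ, hkinv⟩ := wfp_pos_inv hφ
    cases χ with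
    | daimon => exact absurd (LeP.daimon _ rfl) hle
    | omega =>
      exact counter_shallow ξ hξ I k .omega (fun _ _ _ h => by cases h) (by simp)
    | pos ξ' I' k' =>
      obtain ⟨hξ', hkinv'⟩ := wfp_pos_inv hχ
      by_cases hmatch : ξ' = ξ ∧ I' = I
      case neg =>
        exact counter_shallow ξ hξ I k (.pos ξ' I' k')
          (fun a b c h => by
            injection h with h1 h2 h3
            subst h1; subst h2; subst h3
            exact ⟨hξ', hmatch⟩)
          (by simp)
      case pos =>
      obtain ⟨h1, h2⟩ := hmatch
      subst ξ'
      subst I'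
      -- deep case
      have hex : ∃ i ∈ I, ¬ LeN true true (k i) (k' i) := by
        by_contra hno
        push_neg at hno
        exact hle (LeP.pos ξ I k k' hno)
      obtain ⟨i, hi, hni⟩ := hex
      cases hgi : k i with
      | neg g =>
      cases hg'i : k' i with
      | neg g' =>
      have hJex : ∃ J, ¬ LeP true true (g J) (g' J) := by
        by_contra hno
        push_neg at hno
        apply hni
        rw [hgi, hg'i]
        exact LeN.neg g g' hno
      obtain ⟨J, hJle⟩ := hJex
      obtain ⟨Λii, hsubi, hki⟩ := hkinv i hi
      obtain ⟨Λii', hsubi', hki'⟩ := hkinv' i hi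
      have hgWF : WFP (g J) (J.image (fun j => (ξ ++ [i]) ++ [j]) ∪ Λ.erase ξ) := by
        rw [hgi] at hki
        cases hki with
        | neg _ _ _ hf =>
          exact wfpMono (hf J) (Finset.union_subset_union_right hsubi)
      have hg'WF : WFP (g' J) (J.image (fun j => (ξ ++ [i]) ++ [j]) ∪ Λ.erase ξ) := by
        rw [hg'i] at hki'
        cases hki' with
        | neg _ _ _ hf =>
          exact wfpMono (hf J) (Finset.union_subset_union_right hsubi')
      have hAs : IsAnti (J.image (fun j => (ξ ++ [i]) ++ [j]) ∪ Λ.erase ξ) :=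
        isAnti_step hA hξ i J
      have hQ := ih i J
      rw [hgi] at hQ
      simp only [NegDesign.app] at hQ
      obtain ⟨Ψs, hs1, hs2, hs3, hs4⟩ := hQ (g' J) _ hAs hgWF hg'WF hJle
      have hm : ∀ j ∈ J, Ψs ((ξ ++ [i]) ++ [j]) =
          some ((Ψs ((ξ ++ [i]) ++ [j])).getD (.neg fun _ => .omega)) ∧
          WFN ((Ψs ((ξ ++ [i]) ++ [j])).getD (.neg fun _ => .omega)) ((ξ ++ [i]) ++ [j]) ∅ := by
        intro j hj
        obtain ⟨ψ, he, hw⟩ := hs1 _ (Finset.mem_union_left _ (Finset.mem_image_of_mem _ hj))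
        rw [he]
        exact ⟨rfl, hw⟩
      set m : ℕ → NegDesign :=
        fun j => (Ψs ((ξ ++ [i]) ++ [j])).getD (.neg fun _ => .omega) with hmdef
      set h0 : NegDesign :=
        .neg (fun Jx => if Jx = I then .pos (ξ ++ [i]) J m else .omega) with h0def
      have h0WF : WFN h0 ξ ∅ := by
        refine WFN.neg _ _ _ (fun Jx => ?_)
        by_cases hJx : Jx = I
        · subst hJx
          rw [if_pos rfl]
          refine WFP.pos (ξ ++ [i]) J m _ (fun _ => ∅)
            (Finset.mem_union_left _ (Finset.mem_image_of_mem _ hi)) ?_ ?_ ?_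
          · intro _ _; exact Finset.empty_subset _
          · intro _ _ _ _ _; exact Finset.disjoint_empty_left _
          · intro j hj; exact (hm j hj).2
        · rw [if_neg hJx]; exact WFP.omega _
      refine ⟨deepEnv Λ ξ h0 Ψs, ?_, ?_, ?_, ?_⟩
      · intro σ hσ
        by_cases hσξ : σ = ξ
        · subst hσξ
          exact ⟨h0, by rw [deepEnv_eq, if_pos rfl], h0WF⟩
        · obtain ⟨ψ, he, hw⟩ := hs1 σ
            (Finset.mem_union_right _ (Finset.mem_erase.mpr ⟨hσξ, hσ⟩))
          exact ⟨ψ, by rw [deepEnv_eq, if_neg hσξ, if_pos hσ]; exact he, hw⟩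
      · intro σ hσ
        have hσξ : σ ≠ ξ := fun he => hσ (he ▸ hξ)
        rw [deepEnv_eq, if_neg hσξ, if_neg hσ]
      · intro E hE
        have hEξ : E ξ = some h0 := by
          rw [hE ξ ⟨ξ, hξ, List.prefix_rfl⟩, deepEnv_eq, if_pos rfl]
        refine Conv.step ξ I k (fun Jx => if Jx = I then .pos (ξ ++ [i]) J m else .omega)
          E (by rw [hEξ, h0def]) ?_
        have hred : ((fun Jx => if Jx = I then PosDesign.pos (ξ ++ [i]) J m
            else PosDesign.omega) I) = PosDesign.pos (ξ ++ [i]) J m := by simp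
        rw [if_pos rfl]
        refine Conv.step (ξ ++ [i]) J m g _ (by rw [stepEnv_concat _ _ _ _ i hi, hgi]) ?_
        refine hs3 _ (envAgree hA hξ i J Ψs (deepEnv Λ ξ h0 Ψs) E m k h0 I
          (fun σ => deepEnv_eq _ _ _ _ σ) hs2 (fun j hj => (hm j hj).1) hE)
      · intro E hE hc
        have hEξ : E ξ = some h0 := by
          rw [hE ξ ⟨ξ, hξ, List.prefix_rfl⟩, deepEnv_eq, if_pos rfl]
        cases hc with
        | step _ _ _ f _ hf hc2 =>
        rw [hEξ, h0def] at hf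
        injection hf with hf
        injection hf with hf
        subst hf
        have hred : ((fun Jx => if Jx = I then PosDesign.pos (ξ ++ [i]) J m
            else PosDesign.omega) I) = PosDesign.pos (ξ ++ [i]) J m := by simp
        rw [hred] at hc2
        cases hc2 with
        | step _ _ _ f₂ _ hf2 hc3 =>
        rw [stepEnv_concat _ _ _ _ i hi, hg'i] at hf2
        injection hf2 with hf2
        injection hf2 with hf2
        subst hf2
        refine hs4 _ (envAgree hA hξ i J Ψs (deepEnv Λ ξ h0 Ψs) E m k' h0 I
          (fun σ => deepEnv_eq _ _ _ _ σ) hs2 (fun j hj => (hm j hj).1) hE) hc3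
  · -- neg
    intro f ihf J
    exact ihf J

/-- the bi-orthogonal of a singleton design is its upward closure
in the observational order: `{φ}^⊥⊥ = { φ' | φ ⊑ φ' }` (within designs on the
base `⊢ ε`). -/
theorem biorthogonal_singleton (φ : PosDesign) (h : WFP φ {([] : List ℕ)}) :
    {χ : PosDesign | WFP χ {([] : List ℕ)} ∧
        ∀ ψ : NegDesign, WFN ψ [] ∅ → orth φ ψ → orth χ ψ} =
      {χ : PosDesign | WFP χ {([] : List ℕ)} ∧ LeP true true φ χ} := by
  ext χ
  simp only [Set.mem_setOf_eq]
  constructor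
  · rintro ⟨hχWF, hbi⟩
    refine ⟨hχWF, ?_⟩
    by_contra hle
    have hanti : IsAnti ({([] : List ℕ)} : Finset (List ℕ)) := by
      intro σ hσ τ hτ _
      simp only [Finset.mem_singleton] at hσ hτ
      rw [hσ, hτ]
    obtain ⟨Ψ, hs1, hs2, hs3, hs4⟩ := mainQ φ χ {[]} hanti h hχWF hle
    obtain ⟨ψ, he, hw⟩ := hs1 [] (Finset.mem_singleton_self _)
    have hEΨ : ∀ ζ, Up {[]} ζ →
        (fun ζ => if ζ = [] then some ψ else none) ζ = Ψ ζ := by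
      intro ζ _
      by_cases hζ : ζ = []
      · subst hζ
        simp [he]
      · have := hs2 ζ (by simp [hζ])
        simp [hζ, this]
    have hoφ : orth φ ψ := hs3 _ hEΨ
    exact hs4 _ hEΨ (hbi ψ hw hoφ)
  · rintro ⟨hχWF, hle⟩
    exact ⟨hχWF, fun ψ _ ho => orth_mono hle ψ ho⟩
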